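/- arXiv:2103.12754 — 5 statements merged into one kernel-verified Lean document; each statement's English description precedes it below -/
import Mathlib

section
/- Let A be a diagonalizable endomorphism of ℝ^N all of whose eigenvalues lie in (-∞,0) ∪ (1/2,∞), and let x : (0,a] → ℂ^N be differentiable with |s^{1/2} x(s)| bounded, satisfying x'(s) + (1/s) A x(s) + E(s) = 0 where s ↦ |s E(s)| is continuous and bounded on (0,a]. Then |x(s)| is bounded on (0,a]. -/
open Set Filter Topology

lemma scalar_bound (d a : ℝ) (hd : d < 0 ∨ 1/2 < d) (ha : 0 < a)
    (y F : ℝ → ℂ)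
    (hy : ∀ s ∈ Ioc (0:ℝ) a, HasDerivAt y (-(↑d / ↑s) * y s - F s) s)
    (C1 : ℝ) (hyb : ∀ s ∈ Ioc (0:ℝ) a, Real.sqrt s * ‖y s‖ ≤ C1)
    (hFc : ContinuousOn F (Ioc (0:ℝ) a))
    (C2 : ℝ) (hFb : ∀ s ∈ Ioc (0:ℝ) a, s * ‖F s‖ ≤ C2) :
    ∃ C, ∀ s ∈ Ioc (0:ℝ) a, ‖y s‖ ≤ C := by
  have hd0 : d ≠ 0 := by rcases hd with h | h <;> intro h0 <;> nlinarith
  have hC2 : 0 ≤ C2 := le_trans (by positivity) (hFb a ⟨ha, le_refl a⟩)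
  have hC1 : 0 ≤ C1 := le_trans (by positivity) (hyb a ⟨ha, le_refl a⟩)
  set g : ℝ → ℂ := fun u => (↑(u ^ d) : ℂ) * y u with hgdef
  have hg : ∀ u ∈ Ioc (0:ℝ) a, HasDerivAt g (-(↑(u ^ d) : ℂ) * F u) u := by
    intro u hu
    have hu0 : (0:ℝ) < u := hu.1
    have h1 : HasDerivAt (fun v : ℝ => ((v ^ d : ℝ) : ℂ)) ((d * u ^ (d-1) : ℝ) : ℂ) u :=
      (Real.hasDerivAt_rpow_const (Or.inl hu0.ne')).ofReal_comp
    have h2 := h1.mul (hy u hu)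
    refine h2.congr_deriv ?_
    have hsub : (u:ℝ) ^ (d - 1) = u ^ d / u := Real.rpow_sub_one hu0.ne' d
    rw [hsub]
    push_cast
    have : (u:ℂ) ≠ 0 := by exact_mod_cast hu0.ne'
    field_simp
    ring
  -- key integral estimate
  have key : ∀ s t : ℝ, s ∈ Ioc (0:ℝ) a → t ∈ Ioc (0:ℝ) a → s ≤ t →
      ‖g t - g s‖ ≤ C2 * ((t ^ d - s ^ d) / d) := by
    intro s t hs ht hst
    have hs0 : (0:ℝ) < s := hs.1
    have hsub : Icc s t ⊆ Ioc (0:ℝ) a := fun u hu => ⟨lt_of_lt_of_le hs0 hu.1, le_trans hu.2 ht.2⟩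
    have huIcc : uIcc s t = Icc s t := uIcc_of_le hst
    have hrpow_cont : ∀ (p : ℝ), ContinuousOn (fun u : ℝ => u ^ p) (Icc s t) := by
      intro p
      intro u hu
      exact (Real.continuousAt_rpow_const u p
        (Or.inl (ne_of_gt (lt_of_lt_of_le hs0 hu.1)))).continuousWithinAt
    have hcont : ContinuousOn (fun u : ℝ => -(↑(u ^ d) : ℂ) * F u) (Icc s t) := by
      apply ContinuousOn.mul
      · exact ((Complex.continuous_ofReal.comp_continuousOn (hrpow_cont d)).neg)
      · exact hFc.mono hsub
    have hint : IntervalIntegrable (fun u : ℝ => -(↑(u ^ d) : ℂ) * F u)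
        MeasureTheory.volume s t := by
      rw [intervalIntegrable_iff_integrableOn_Icc_of_le hst]
      exact hcont.integrableOn_compact isCompact_Icc
    have hftc : ∫ u in s..t, -(↑(u ^ d) : ℂ) * F u = g t - g s := by
      apply intervalIntegral.integral_eq_sub_of_hasDerivAt
      · intro u hu
        exact hg u (hsub (huIcc ▸ hu))
      · exact hint
    rw [← hftc]
    calc ‖∫ u in s..t, -(↑(u ^ d) : ℂ) * F u‖
        ≤ ∫ u in s..t, ‖-(↑(u ^ d) : ℂ) * F u‖ :=
          intervalIntegral.norm_integral_le_integral_norm hst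
      _ ≤ ∫ u in s..t, C2 * u ^ (d - 1) := by
          apply intervalIntegral.integral_mono_on hst
          · exact hint.norm
          · apply ContinuousOn.intervalIntegrable
            rw [huIcc]
            exact (hrpow_cont (d-1)).const_smul C2
          · intro u hu
            have hu0 : (0:ℝ) < u := lt_of_lt_of_le hs0 hu.1
            have : ‖-(↑(u ^ d) : ℂ) * F u‖ = u ^ d * ‖F u‖ := by
              rw [norm_mul, norm_neg, Complex.norm_real, Real.norm_eq_abs,
                abs_of_pos (Real.rpow_pos_of_pos hu0 d)]
            rw [this]
            have hud : u ^ d = u ^ (d-1) * u := by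
              rw [Real.rpow_sub_one hu0.ne' d]; field_simp
            rw [hud, mul_assoc]
            rw [mul_comm C2 (u ^ (d-1))]
            apply mul_le_mul_of_nonneg_left _ (le_of_lt (Real.rpow_pos_of_pos hu0 _))
            exact hFb u (hsub hu)
      _ = C2 * ((t ^ d - s ^ d) / d) := by
          rw [intervalIntegral.integral_const_mul, integral_rpow]
          · ring_nf
          · right
            constructor
            · intro h; apply hd0; linarith [h]
            · rw [huIcc]
              intro h0
              exact absurd h0.1 (not_le.mpr hs0)
  have hgs : ∀ s ∈ Ioc (0:ℝ) a, ‖g s‖ = s ^ d * ‖y s‖ := by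
    intro s hs
    rw [hgdef]
    simp only [norm_mul, Complex.norm_real, Real.norm_eq_abs,
      abs_of_pos (Real.rpow_pos_of_pos hs.1 d)]
  have hamem : a ∈ Ioc (0:ℝ) a := ⟨ha, le_refl a⟩
  rcases hd with hneg | hpos
  · -- d < 0
    refine ⟨‖g a‖ * a ^ (-d) + C2 / (-d), ?_⟩
    intro s hs
    have hs0 : (0:ℝ) < s := hs.1
    have hsd : (0:ℝ) < s ^ d := Real.rpow_pos_of_pos hs0 d
    have had : (0:ℝ) < a ^ d := Real.rpow_pos_of_pos ha d
    have h1 : ‖g s‖ ≤ ‖g a‖ + C2 * ((a ^ d - s ^ d) / d) := by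
      have hk := key s a hs hamem hs.2
      have := norm_sub_norm_le (g s) (g a)
      rw [← norm_sub_rev] at this
      linarith
    have h2 : C2 * ((a ^ d - s ^ d) / d) ≤ C2 * (s ^ d / (-d)) := by
      apply mul_le_mul_of_nonneg_left _ hC2
      have heq : (a ^ d - s ^ d) / d = (s ^ d - a ^ d) / (-d) := by ring
      rw [heq, div_le_div_iff₀ (by linarith) (by linarith)]
      nlinarith
    have hys : ‖y s‖ = ‖g s‖ * s ^ (-d) := by
      rw [hgs s hs, Real.rpow_neg hs0.le]
      field_simp
    have hsmd : s ^ (-d) ≤ a ^ (-d) := Real.rpow_le_rpow hs0.le hs.2 (by linarith)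
    have hsmd0 : (0:ℝ) < s ^ (-d) := Real.rpow_pos_of_pos hs0 (-d)
    have hcancel : s ^ d * s ^ (-d) = 1 := by
      rw [← Real.rpow_add hs0]; simp
    have hga : (0:ℝ) ≤ ‖g a‖ := norm_nonneg _
    calc ‖y s‖ = ‖g s‖ * s ^ (-d) := hys
      _ ≤ (‖g a‖ + C2 * (s ^ d / (-d))) * s ^ (-d) := by
          apply mul_le_mul_of_nonneg_right _ hsmd0.le
          linarith
      _ = ‖g a‖ * s ^ (-d) + (C2 / (-d)) * (s ^ d * s ^ (-d)) := by ring
      _ = ‖g a‖ * s ^ (-d) + C2 / (-d) := by rw [hcancel, mul_one]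
      _ ≤ ‖g a‖ * a ^ (-d) + C2 / (-d) := by nlinarith
  · -- 1/2 < d
    refine ⟨C2 / d, ?_⟩
    intro s hs
    have hs0 : (0:ℝ) < s := hs.1
    have hdpos : (0:ℝ) < d := by linarith
    have hsd : (0:ℝ) < s ^ d := Real.rpow_pos_of_pos hs0 d
    have hbound : ∀ t ∈ Ioc (0:ℝ) s, ‖g s‖ ≤ C1 * t ^ (d - 1/2) + C2 * (s ^ d / d) := by
      intro t ht
      have ht0 : (0:ℝ) < t := ht.1
      have htmem : t ∈ Ioc (0:ℝ) a := ⟨ht0, le_trans ht.2 hs.2⟩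
      have hk := key t s htmem hs ht.2
      have h1 : ‖g s‖ ≤ ‖g t‖ + C2 * ((s ^ d - t ^ d) / d) := by
        have := norm_sub_norm_le (g s) (g t)
        linarith
      have h2 : C2 * ((s ^ d - t ^ d) / d) ≤ C2 * (s ^ d / d) := by
        apply mul_le_mul_of_nonneg_left _ hC2
        rw [div_le_div_iff₀ hdpos hdpos]
        nlinarith [Real.rpow_pos_of_pos ht0 d]
      have h3 : ‖g t‖ ≤ C1 * t ^ (d - 1/2) := by
        rw [hgs t htmem]
        have : t ^ d = t ^ (d - 1/2) * t ^ (1/2 : ℝ) := by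
          rw [← Real.rpow_add ht0]; ring_nf
        rw [this, ← Real.sqrt_eq_rpow, mul_assoc]
        rw [mul_comm C1 _]
        apply mul_le_mul_of_nonneg_left (hyb t htmem)
          (le_of_lt (Real.rpow_pos_of_pos ht0 _))
      linarith
    have hlim : Tendsto (fun t : ℝ => C1 * t ^ (d - 1/2) + C2 * (s ^ d / d))
        (𝓝[>] (0:ℝ)) (𝓝 (C1 * 0 + C2 * (s ^ d / d))) := by
      apply Tendsto.mono_left _ nhdsWithin_le_nhds
      apply Tendsto.add_const
      apply Tendsto.const_mul
      have := (Real.continuousAt_rpow_const 0 (d - 1/2) (Or.inr (by linarith))).tendsto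
      rwa [Real.zero_rpow (by norm_num; linarith)] at this
    have hgle : ‖g s‖ ≤ C1 * 0 + C2 * (s ^ d / d) := by
      apply ge_of_tendsto hlim
      filter_upwards [Ioc_mem_nhdsGT_of_mem (by constructor <;> simp [hs0] : (0:ℝ) ∈ Ico (0:ℝ) s)] with t ht
      exact hbound t ht
    have hgs' := hgs s hs
    rw [hgs'] at hgle
    have heq : C1 * 0 + C2 * (s ^ d / d) = s ^ d * (C2 / d) := by ring
    rw [heq] at hgle
    exact le_of_mul_le_mul_left hgle hsd


lemma mulVec_entry_bound {N : ℕ} (M : Matrix (Fin N) (Fin N) ℂ) (v : Fin N → ℂ) (i : Fin N) :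
    ‖M.mulVec v i‖ ≤ (∑ p, ∑ q, ‖M p q‖) * ‖v‖ := by
  have h1 : ‖M.mulVec v i‖ ≤ ∑ j, ‖M i j‖ * ‖v‖ := by
    simp only [Matrix.mulVec, dotProduct]
    refine le_trans (norm_sum_le _ _) (Finset.sum_le_sum fun j _ => ?_)
    rw [norm_mul]
    exact mul_le_mul_of_nonneg_left (norm_le_pi_norm v j) (norm_nonneg _)
  rw [← Finset.sum_mul] at h1
  refine le_trans h1 (mul_le_mul_of_nonneg_right ?_ (norm_nonneg _))
  exact Finset.single_le_sum (f := fun p => ∑ q, ‖M p q‖)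
    (fun p _ => Finset.sum_nonneg fun q _ => norm_nonneg _) (Finset.mem_univ i)

/-- If `A` is a diagonalizable real `N × N` matrix all of whose eigenvalues lie
in `(-∞,0) ∪ (1/2,∞)`, and `x : (0,a] → ℂ^N` is differentiable with `√s * ‖x s‖` bounded,
satisfying `x' + (1/s) A x + E = 0` with `s ↦ ‖s • E s‖` continuous and bounded, then
`‖x s‖` is bounded on `(0,a]`. -/
theorem stmt_0 (N : ℕ) (A : Matrix (Fin N) (Fin N) ℝ)
    (hA : ∃ (P : Matrix (Fin N) (Fin N) ℝ) (d : Fin N → ℝ),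
      IsUnit P.det ∧ A = P * Matrix.diagonal d * P⁻¹ ∧
      ∀ i, d i < 0 ∨ 1/2 < d i)
    (a : ℝ) (ha : 0 < a)
    (x x' E : ℝ → (Fin N → ℂ))
    (hx : ∀ s ∈ Ioc (0:ℝ) a, HasDerivAt x (x' s) s)
    (hxb : ∃ C, ∀ s ∈ Ioc (0:ℝ) a, Real.sqrt s * ‖x s‖ ≤ C)
    (hE : ContinuousOn (fun s => s • E s) (Ioc (0:ℝ) a))
    (hEb : ∃ C, ∀ s ∈ Ioc (0:ℝ) a, ‖s • E s‖ ≤ C)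
    (hode : ∀ s ∈ Ioc (0:ℝ) a,
      x' s + (1/s) • (A.map (fun r => (r : ℂ))).mulVec (x s) + E s = 0) :
    ∃ C, ∀ s ∈ Ioc (0:ℝ) a, ‖x s‖ ≤ C := by
  obtain ⟨P, dv, hPdet, hAeq, hdv⟩ := hA
  obtain ⟨C1, hxb⟩ := hxb
  obtain ⟨CE, hEb⟩ := hEb
  set Q : Matrix (Fin N) (Fin N) ℂ := (P⁻¹).map (fun r => (r:ℂ)) with hQ
  set Pc : Matrix (Fin N) (Fin N) ℂ := P.map (fun r => (r:ℂ)) with hPc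
  set Ac : Matrix (Fin N) (Fin N) ℂ := A.map (fun r => (r:ℂ)) with hAc
  have hmap : ∀ (M M' : Matrix (Fin N) (Fin N) ℝ),
      (M*M').map (fun r => (r:ℂ)) = M.map (fun r => (r:ℂ)) * M'.map (fun r => (r:ℂ)) :=
    fun M M' => Matrix.map_mul (f := Complex.ofRealHom)
  have h1map : (1 : Matrix (Fin N) (Fin N) ℝ).map (fun r => (r:ℂ)) = 1 :=
    Matrix.map_one _ (by simp) (by simp)
  have hPQ : Pc * Q = 1 := by
    rw [hPc, hQ, ← hmap, Matrix.mul_nonsing_inv P hPdet, h1map]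
  have hreal : P⁻¹ * A = Matrix.diagonal dv * P⁻¹ := by
    rw [hAeq, ← mul_assoc, ← mul_assoc, Matrix.nonsing_inv_mul P hPdet, one_mul]
  have hQA : Q * Ac = Matrix.diagonal (fun i => ((dv i : ℝ) : ℂ)) * Q := by
    rw [hQ, hAc, ← hmap, hreal, hmap, Matrix.diagonal_map (by simp)]
  set y : ℝ → Fin N → ℂ := fun s => Q.mulVec (x s) with hy
  set F : ℝ → Fin N → ℂ := fun s => Q.mulVec (E s) with hF
  set K : ℝ := ∑ p, ∑ q, ‖Q p q‖ with hK
  set K' : ℝ := ∑ p, ∑ q, ‖Pc p q‖ with hK'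
  have hK0 : 0 ≤ K := Finset.sum_nonneg fun p _ => Finset.sum_nonneg fun q _ => norm_nonneg _
  have hK'0 : 0 ≤ K' := Finset.sum_nonneg fun p _ => Finset.sum_nonneg fun q _ => norm_nonneg _
  have hxprime : ∀ s ∈ Ioc (0:ℝ) a, x' s = -((1/s) • Ac.mulVec (x s)) - E s := by
    intro s hs
    have h := hode s hs
    rw [add_assoc] at h
    have h2 := eq_neg_of_add_eq_zero_left h
    rw [h2, neg_add, ← sub_eq_add_neg]
  have hsmulF : ∀ s : ℝ, s • F s = Q.mulVec (s • E s) := by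
    intro s
    rw [hF, Matrix.mulVec_smul]
  have hderiv : ∀ (i : Fin N), ∀ s ∈ Ioc (0:ℝ) a,
      HasDerivAt (fun u => y u i) (-(↑(dv i)/(↑s:ℂ)) * y s i - F s i) s := by
    intro i s hs
    have hcomp : Q.mulVec (x' s) i = -(↑(dv i)/(↑s:ℂ)) * y s i - F s i := by
      rw [hxprime s hs, Matrix.mulVec_sub, Matrix.mulVec_neg, Matrix.mulVec_smul,
        Matrix.mulVec_mulVec, hQA, ← Matrix.mulVec_mulVec]
      simp only [Pi.sub_apply, Pi.neg_apply, Pi.smul_apply, Matrix.mulVec_diagonal]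
      rw [Complex.real_smul]
      have hs0 : (s:ℂ) ≠ 0 := by exact_mod_cast hs.1.ne'
      push_cast
      field_simp
      rfl
    have hd : HasDerivAt (fun u => y u i) (Q.mulVec (x' s) i) s := by
      have hcw := hasDerivAt_pi.mp (hx s hs)
      have hsum : HasDerivAt (fun u => ∑ j, Q i j * x u j) (∑ j, Q i j * x' s j) s :=
        HasDerivAt.fun_sum fun j _ => (hcw j).const_mul _
      simpa only [hy, Matrix.mulVec, dotProduct] using hsum
    rwa [hcomp] at hd
  have hyb : ∀ (i : Fin N), ∀ s ∈ Ioc (0:ℝ) a, Real.sqrt s * ‖y s i‖ ≤ K * C1 := by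
    intro i s hs
    have h1 : ‖y s i‖ ≤ K * ‖x s‖ := mulVec_entry_bound Q (x s) i
    calc Real.sqrt s * ‖y s i‖ ≤ Real.sqrt s * (K * ‖x s‖) :=
          mul_le_mul_of_nonneg_left h1 (Real.sqrt_nonneg s)
      _ = K * (Real.sqrt s * ‖x s‖) := by ring
      _ ≤ K * C1 := mul_le_mul_of_nonneg_left (hxb s hs) hK0
  have hFb : ∀ (i : Fin N), ∀ s ∈ Ioc (0:ℝ) a, s * ‖F s i‖ ≤ K * CE := by
    intro i s hs
    have h0 : s * ‖F s i‖ = ‖(s • F s) i‖ := by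
      rw [Pi.smul_apply, norm_smul, Real.norm_eq_abs, abs_of_pos hs.1]
    rw [h0, hsmulF]
    exact le_trans (mulVec_entry_bound Q _ i) (mul_le_mul_of_nonneg_left (hEb s hs) hK0)
  have hFc : ∀ (i : Fin N), ContinuousOn (fun s => F s i) (Ioc (0:ℝ) a) := by
    intro i
    have hc1 : ContinuousOn (fun s => (Q.mulVec (s • E s)) i) (Ioc (0:ℝ) a) := by
      simp only [Matrix.mulVec, dotProduct]
      apply continuousOn_finset_sum
      intro j _
      exact continuousOn_const.mul ((continuous_apply j).comp_continuousOn hE)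
    have heq : ∀ s ∈ Ioc (0:ℝ) a, F s i = ((s:ℂ))⁻¹ * (Q.mulVec (s • E s)) i := by
      intro s hs
      rw [← hsmulF, Pi.smul_apply, Complex.real_smul]
      have hs0 : (s:ℂ) ≠ 0 := by exact_mod_cast hs.1.ne'
      field_simp
    apply ContinuousOn.congr _ heq
    apply ContinuousOn.mul _ hc1
    apply ContinuousOn.inv₀
    · exact Complex.continuous_ofReal.continuousOn
    · intro s hs
      exact_mod_cast hs.1.ne'
  have hcomp_bdd : ∀ (i : Fin N), ∃ Ci, ∀ s ∈ Ioc (0:ℝ) a, ‖y s i‖ ≤ Ci := by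
    intro i
    exact scalar_bound (dv i) a (hdv i) ha (fun s => y s i) (fun s => F s i)
      (hderiv i) (K*C1) (hyb i) (hFc i) (K*CE) (hFb i)
  choose Cf hCf using hcomp_bdd
  set B : ℝ := ∑ i, |Cf i| with hB
  have hB0 : 0 ≤ B := Finset.sum_nonneg fun i _ => abs_nonneg _
  refine ⟨K' * B, ?_⟩
  intro s hs
  have hyB : ‖y s‖ ≤ B := by
    rw [pi_norm_le_iff_of_nonneg hB0]
    intro i
    refine le_trans (hCf i s hs) (le_trans (le_abs_self _) ?_)
    exact Finset.single_le_sum (f := fun j => |Cf j|) (fun j _ => abs_nonneg _) (Finset.mem_univ i)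
  have hxs : x s = Pc.mulVec (y s) := by
    rw [hy]
    simp only []
    rw [Matrix.mulVec_mulVec, hPQ, Matrix.one_mulVec]
  rw [hxs, pi_norm_le_iff_of_nonneg (by positivity)]
  intro i
  refine le_trans (mulVec_entry_bound Pc (y s) i) ?_
  exact mul_le_mul_of_nonneg_left hyB hK'0
end

section
/- Let λ < 0 and let y : (0,a] → ℂ be differentiable with s^{1/2}|y(s)| bounded, satisfying y'(s) + (λ/s) y(s) + E(s) = 0 with |s E(s)| continuous and bounded. Then y is bounded on (0,a]: explicitly, y(s) = s^{-λ} a^{λ} y(a) + s^{-λ} ∫_s^a t^{λ} E(t) dt, and this expression is uniformly bounded. -/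
open Set

/-- For `λ < 0`, a differentiable `y : (0,a] → ℂ` with `√s * |y s|` bounded,
satisfying `y' + (λ/s) y + E = 0` with `s|E(s)|` continuous and bounded, satisfies
`y s = s^{-λ} a^{λ} y a + s^{-λ} ∫_s^a t^{λ} E t dt` and is uniformly bounded. -/
theorem stmt_1 (a : ℝ) (ha : 0 < a) (l : ℝ) (hl : l < 0)
    (y y' E : ℝ → ℂ)
    (hy : ∀ s ∈ Ioc (0:ℝ) a, HasDerivAt y (y' s) s)
    (hyb : ∃ C, ∀ s ∈ Ioc (0:ℝ) a, Real.sqrt s * ‖y s‖ ≤ C)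
    (hE : ContinuousOn E (Ioc (0:ℝ) a))
    (hEb : ∃ C, ∀ s ∈ Ioc (0:ℝ) a, s * ‖E s‖ ≤ C)
    (hode : ∀ s ∈ Ioc (0:ℝ) a, y' s + (l/s) • y s + E s = 0) :
    (∀ s ∈ Ioc (0:ℝ) a,
      y s = ((s ^ (-l) : ℝ) : ℂ) * ((a ^ l : ℝ) : ℂ) * y a
        + ((s ^ (-l) : ℝ) : ℂ) * ∫ t in s..a, ((t ^ l : ℝ) : ℂ) * E t) ∧
    ∃ C, ∀ s ∈ Ioc (0:ℝ) a, ‖y s‖ ≤ C := by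
  obtain ⟨C, hC⟩ := hEb
  have hC0 : 0 ≤ C := le_trans (by positivity) (hC a ⟨ha, le_refl a⟩)
  -- key identity
  have key : ∀ s ∈ Ioc (0:ℝ) a, ((s ^ l : ℝ) : ℂ) * y s
      = ((a ^ l : ℝ) : ℂ) * y a + ∫ t in s..a, ((t ^ l : ℝ) : ℂ) * E t := by
    intro s hs
    have hsa : s ≤ a := hs.2
    have hIcc : ∀ t ∈ Set.uIcc s a, t ∈ Ioc (0:ℝ) a := by
      intro t ht
      rw [Set.uIcc_of_le hsa] at ht
      exact ⟨lt_of_lt_of_le hs.1 ht.1, ht.2⟩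
    have hderiv : ∀ t ∈ Set.uIcc s a,
        HasDerivAt (fun u => ((u ^ l : ℝ) : ℂ) * y u) (-(((t ^ l : ℝ) : ℂ) * E t)) t := by
      intro t ht
      have hta := hIcc t ht
      have ht0 : (0:ℝ) < t := hta.1
      have h1 : HasDerivAt (fun u : ℝ => ((u ^ l : ℝ) : ℂ)) ((l * t ^ (l - 1) : ℝ) : ℂ) t :=
        (Real.hasDerivAt_rpow_const (Or.inl ht0.ne')).ofReal_comp
      have h2 := h1.mul (hy t hta)
      have hy' : y' t = -((l / t : ℝ) • y t) - E t := by
        have := hode t hta; linear_combination this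
      refine h2.congr_deriv ?_
      rw [hy']
      have hrw : ((t ^ l : ℝ) : ℂ) * ((l / t : ℝ) : ℂ) = ((l * t ^ (l - 1) : ℝ) : ℂ) := by
        push_cast
        rw [Real.rpow_sub_one ht0.ne']
        field_simp
        push_cast
        ring
      simp only [Complex.real_smul]
      linear_combination (-(y t)) * hrw
    have hcont : ContinuousOn (fun t : ℝ => -(((t ^ l : ℝ) : ℂ) * E t)) (Set.uIcc s a) := by
      apply ContinuousOn.neg
      apply ContinuousOn.mul
      · exact Complex.continuous_ofReal.comp_continuousOn
          (fun t ht => (Real.continuousAt_rpow_const t l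
            (Or.inl (hIcc t ht).1.ne')).continuousWithinAt)
      · exact hE.mono (fun t ht => hIcc t ht)
    have hint : IntervalIntegrable (fun t : ℝ => -(((t ^ l : ℝ) : ℂ) * E t)) MeasureTheory.volume s a :=
      hcont.intervalIntegrable
    have hftc := intervalIntegral.integral_eq_sub_of_hasDerivAt hderiv hint
    rw [intervalIntegral.integral_neg] at hftc
    linear_combination hftc
  have hinv : ∀ s ∈ Ioc (0:ℝ) a, ((s ^ (-l) : ℝ) : ℂ) * ((s ^ l : ℝ) : ℂ) = 1 := by
    intro s hs
    rw [← Complex.ofReal_mul, ← Real.rpow_add hs.1]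
    simp
  constructor
  · intro s hs
    have h1 : y s = ((s ^ (-l) : ℝ) : ℂ) * (((s ^ l : ℝ) : ℂ) * y s) := by
      rw [← mul_assoc, hinv s hs, one_mul]
    rw [h1, key s hs]
    ring
  · refine ⟨‖y a‖ + C / (-l), fun s hs => ?_⟩
    have hs0 : (0:ℝ) < s := hs.1
    have hsa : s ≤ a := hs.2
    set u := s ^ l with hu
    set v := a ^ l with hv
    have hu0 : 0 < u := Real.rpow_pos_of_pos hs0 l
    have hv0 : 0 < v := Real.rpow_pos_of_pos ha l
    have hvu : v ≤ u := Real.rpow_le_rpow_of_nonpos hs0 hsa hl.le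
    -- bound the integral
    have hIcc : ∀ t ∈ Set.uIcc s a, t ∈ Ioc (0:ℝ) a := by
      intro t ht
      rw [Set.uIcc_of_le hsa] at ht
      exact ⟨lt_of_lt_of_le hs0 ht.1, ht.2⟩
    have hcont1 : ContinuousOn (fun t : ℝ => ‖((t ^ l : ℝ) : ℂ) * E t‖) (Set.uIcc s a) := by
      apply ContinuousOn.norm
      apply ContinuousOn.mul
      · exact Complex.continuous_ofReal.comp_continuousOn
          (fun t ht => (Real.continuousAt_rpow_const t l
            (Or.inl (hIcc t ht).1.ne')).continuousWithinAt)
      · exact hE.mono (fun t ht => hIcc t ht)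
    have hcont2 : ContinuousOn (fun t : ℝ => C * t ^ (l - 1)) (Set.uIcc s a) :=
      continuousOn_const.mul (fun t ht => (Real.continuousAt_rpow_const t (l - 1)
        (Or.inl (hIcc t ht).1.ne')).continuousWithinAt)
    have hmono : ∫ t in s..a, ‖((t ^ l : ℝ) : ℂ) * E t‖ ≤ ∫ t in s..a, C * t ^ (l - 1) := by
      apply intervalIntegral.integral_mono_on hsa hcont1.intervalIntegrable
        hcont2.intervalIntegrable
      intro t ht
      have hta : t ∈ Ioc (0:ℝ) a := ⟨lt_of_lt_of_le hs0 ht.1, ht.2⟩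
      have ht0 : (0:ℝ) < t := hta.1
      have hEt : ‖E t‖ ≤ C / t := by
        rw [le_div_iff₀ ht0]
        linarith [hC t hta, mul_comm t (‖E t‖)]
      have htl : (0:ℝ) < t ^ l := Real.rpow_pos_of_pos ht0 l
      calc ‖((t ^ l : ℝ) : ℂ) * E t‖ = t ^ l * ‖E t‖ := by
            rw [norm_mul, Complex.norm_real, Real.norm_eq_abs, abs_of_pos htl]
        _ ≤ t ^ l * (C / t) := by
            exact mul_le_mul_of_nonneg_left hEt htl.le
        _ = C * t ^ (l - 1) := by
            rw [Real.rpow_sub_one ht0.ne']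
            field_simp
    have hcalc : ∫ t in s..a, C * t ^ (l - 1) = C * ((v - u) / l) := by
      rw [intervalIntegral.integral_const_mul, integral_rpow]
      · rw [hu, hv]
        ring_nf
      · right
        constructor
        · intro h; linarith
        · rw [Set.uIcc_of_le hsa]
          intro h
          exact absurd h.1 (not_le.mpr hs0)
    have hnorm : ‖∫ t in s..a, ((t ^ l : ℝ) : ℂ) * E t‖
        ≤ ∫ t in s..a, ‖((t ^ l : ℝ) : ℂ) * E t‖ := by
      simpa using intervalIntegral.norm_integral_le_integral_norm
        (f := fun t : ℝ => ((t ^ l : ℝ) : ℂ) * E t) (μ := MeasureTheory.volume) hsa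
    -- assemble
    have hmain : u * ‖y s‖ ≤ v * ‖y a‖ + C * ((v - u) / l) := by
      have := key s hs
      have h1 : u * ‖y s‖ = ‖((s ^ l : ℝ) : ℂ) * y s‖ := by
        rw [norm_mul, Complex.norm_real, Real.norm_eq_abs, abs_of_pos hu0]
      rw [h1, this]
      calc ‖((a ^ l : ℝ) : ℂ) * y a + ∫ t in s..a, ((t ^ l : ℝ) : ℂ) * E t‖
          ≤ ‖((a ^ l : ℝ) : ℂ) * y a‖
            + ‖∫ t in s..a, ((t ^ l : ℝ) : ℂ) * E t‖ := norm_add_le _ _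
        _ ≤ v * ‖y a‖ + C * ((v - u) / l) := by
            apply add_le_add
            · rw [norm_mul, Complex.norm_real, Real.norm_eq_abs, abs_of_pos hv0]
            · exact le_trans hnorm (hcalc ▸ hmono)
    have hA : (0:ℝ) ≤ ‖y a‖ := norm_nonneg _
    have hL : (0:ℝ) < -l := by linarith
    rw [div_eq_mul_inv] at hmain ⊢
    have hl' : (l:ℝ)⁻¹ = -(-l)⁻¹ := by field_simp
    rw [hl'] at hmain
    have hLinv : (0:ℝ) < (-l)⁻¹ := inv_pos.mpr hL
    nlinarith [mul_le_mul_of_nonneg_right hvu hA, mul_pos hu0 hLinv, mul_nonneg hC0 hLinv.le,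
      mul_le_mul_of_nonneg_left hvu (mul_nonneg hC0 hLinv.le)]
end

section
/- Let λ > 1/2 and let y : (0,a] → ℂ be differentiable with s^{1/2}|y(s)| bounded, satisfying y'(s) + (λ/s) y(s) + E(s) = 0 with |s E(s)| continuous and bounded. Then y(s) = -s^{-λ} ∫_0^s t^{λ} E(t) dt, and y is uniformly bounded on (0,a]. -/
open Set MeasureTheory intervalIntegral

/-- For `λ > 1/2`, a differentiable `y : (0,a] → ℂ` with `√s * |y s|` bounded,
satisfying `y' + (λ/s) y + E = 0` with `s|E(s)|` continuous and bounded, satisfies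
`y s = -s^{-λ} ∫_0^s t^{λ} E t dt` and is uniformly bounded on `(0,a]`. -/
theorem stmt_2 (a : ℝ) (ha : 0 < a) (l : ℝ) (hl : 1/2 < l)
    (y y' E : ℝ → ℂ)
    (hy : ∀ s ∈ Ioc (0:ℝ) a, HasDerivAt y (y' s) s)
    (hyb : ∃ C, ∀ s ∈ Ioc (0:ℝ) a, Real.sqrt s * ‖y s‖ ≤ C)
    (hE : ContinuousOn E (Ioc (0:ℝ) a))
    (hEb : ∃ C, ∀ s ∈ Ioc (0:ℝ) a, s * ‖E s‖ ≤ C)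
    (hode : ∀ s ∈ Ioc (0:ℝ) a, y' s + (l/s) • y s + E s = 0) :
    (∀ s ∈ Ioc (0:ℝ) a,
      y s = -(((s ^ (-l) : ℝ) : ℂ) * ∫ t in (0:ℝ)..s, ((t ^ l : ℝ) : ℂ) * E t)) ∧
    ∃ C, ∀ s ∈ Ioc (0:ℝ) a, ‖y s‖ ≤ C := by
  obtain ⟨Cy, hCy⟩ := hyb
  obtain ⟨Ce, hCe⟩ := hEb
  have hl0 : (0:ℝ) < l := lt_trans (by norm_num) hl
  have hCe0 : 0 ≤ Ce :=
    le_trans (mul_nonneg ha.le (norm_nonneg _)) (hCe a ⟨ha, le_refl a⟩)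
  have hCy0 : 0 ≤ Cy :=
    le_trans (mul_nonneg (Real.sqrt_nonneg a) (norm_nonneg _)) (hCy a ⟨ha, le_refl a⟩)
  set f : ℝ → ℂ := fun t => ((t ^ l : ℝ) : ℂ) * E t with hfdef
  -- pointwise bound on f
  have hfb : ∀ s ∈ Ioc (0:ℝ) a, ‖f s‖ ≤ Ce * s ^ (l - 1) := by
    intro s hs
    have hs0 : (0:ℝ) < s := hs.1
    have : ‖f s‖ = s ^ l * ‖E s‖ := by
      simp [hfdef, Complex.norm_real, Real.norm_eq_abs,
        abs_of_nonneg (Real.rpow_nonneg hs0.le l)]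
    rw [this]
    have hsl : s ^ l = s ^ (l - 1) * s := by
      rw [← Real.rpow_add_one hs0.ne' (l - 1), sub_add_cancel]
    rw [hsl, mul_assoc]
    calc s ^ (l - 1) * (s * ‖E s‖) ≤ s ^ (l - 1) * Ce := by
          exact mul_le_mul_of_nonneg_left (hCe s hs) (Real.rpow_nonneg hs0.le _)
      _ = Ce * s ^ (l - 1) := mul_comm _ _
  -- integrability of f on [0, s]
  have hfint : ∀ s ∈ Ioc (0:ℝ) a, IntervalIntegrable f volume 0 s := by
    intro s hs
    have hbint : IntervalIntegrable (fun t : ℝ => Ce * t ^ (l - 1)) volume 0 s :=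
      (intervalIntegrable_rpow' (by linarith)).const_mul Ce
    rw [intervalIntegrable_iff_integrableOn_Ioc_of_le hs.1.le] at hbint ⊢
    refine Integrable.mono' hbint ?_ ?_
    · refine ContinuousOn.aestronglyMeasurable ?_ measurableSet_Ioc
      refine ContinuousOn.mul ?_ (hE.mono (Ioc_subset_Ioc_right hs.2))
      refine Complex.continuous_ofReal.comp_continuousOn ?_
      intro t ht
      exact (Real.continuousAt_rpow_const t l (Or.inl ht.1.ne')).continuousWithinAt
    · refine (ae_restrict_iff' measurableSet_Ioc).2 (Filter.Eventually.of_forall ?_)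
      intro t ht
      exact hfb t ⟨ht.1, ht.2.trans hs.2⟩
  -- bound on the integral of f from 0 to ε
  have hintb : ∀ s ∈ Ioc (0:ℝ) a, ‖∫ t in (0:ℝ)..s, f t‖ ≤ Ce / l * s ^ l := by
    intro s hs
    have h1 : ‖∫ t in (0:ℝ)..s, f t‖ ≤ |∫ t in (0:ℝ)..s, Ce * t ^ (l - 1)| := by
      refine intervalIntegral.norm_integral_le_abs_of_norm_le ?_
        ((intervalIntegrable_rpow' (by linarith)).const_mul Ce)
      rw [uIoc_of_le hs.1.le]
      refine (ae_restrict_iff' measurableSet_Ioc).2 (Filter.Eventually.of_forall ?_)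
      intro t ht
      exact hfb t ⟨ht.1, ht.2.trans hs.2⟩
    have h2 : ∫ t in (0:ℝ)..s, Ce * t ^ (l - 1) = Ce / l * s ^ l := by
      rw [intervalIntegral.integral_const_mul, integral_rpow (Or.inl (by linarith))]
      rw [sub_add_cancel, Real.zero_rpow hl0.ne']
      ring
    rw [h2] at h1
    refine h1.trans (le_of_eq (abs_of_nonneg ?_))
    exact mul_nonneg (div_nonneg hCe0 hl0.le) (Real.rpow_nonneg hs.1.le _)
  -- the function F t = t^l * y t and its derivative
  set F : ℝ → ℂ := fun t => ((t ^ l : ℝ) : ℂ) * y t with hFdef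
  have hFderiv : ∀ t ∈ Ioc (0:ℝ) a, HasDerivAt F (-f t) t := by
    intro t ht
    have ht0 : (0:ℝ) < t := ht.1
    have hc : HasDerivAt (fun u : ℝ => ((u ^ l : ℝ) : ℂ)) ((l * t ^ (l - 1) : ℝ) : ℂ) t :=
      (Real.hasDerivAt_rpow_const (Or.inl ht0.ne')).ofReal_comp
    have hprod := hc.mul (hy t ht)
    have hy' : y' t = -(((l / t : ℝ) : ℂ) * y t) - E t := by
      have := hode t ht
      have hsm : (l / t) • y t = ((l / t : ℝ) : ℂ) * y t := by
        rw [Complex.real_smul]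
      rw [hsm] at this
      linear_combination this
    have heq : ((l * t ^ (l - 1) : ℝ) : ℂ) * y t + ((t ^ l : ℝ) : ℂ) * y' t = -f t := by
      have htl : (t : ℝ) ^ l = t ^ (l - 1) * t := by
        rw [← Real.rpow_add_one ht0.ne' (l - 1), sub_add_cancel]
      have hre : ((l * t ^ (l - 1) : ℝ) : ℂ) = ((t ^ l : ℝ) : ℂ) * ((l / t : ℝ) : ℂ) := by
        rw [← Complex.ofReal_mul]
        congr 1
        rw [htl]
        field_simp
      show ((l * t ^ (l - 1) : ℝ) : ℂ) * y t + ((t ^ l : ℝ) : ℂ) * y' t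
          = -(((t ^ l : ℝ) : ℂ) * E t)
      rw [hy', hre]
      ring
    rw [← heq]
    exact hprod
  -- main formula: F s = -∫_0^s f
  have hkey : ∀ s ∈ Ioc (0:ℝ) a, F s = -(∫ t in (0:ℝ)..s, f t) := by
    intro s hs
    have hs0 : (0:ℝ) < s := hs.1
    -- for every ε ∈ (0, s): F s + ∫_0^s f = F ε + ∫_0^ε f
    have hstep : ∀ ε ∈ Ioo (0:ℝ) s, F s + (∫ t in (0:ℝ)..s, f t) = F ε + ∫ t in (0:ℝ)..ε, f t := by
      intro ε hε
      have hεa : ε ∈ Ioc (0:ℝ) a := ⟨hε.1, hε.2.le.trans hs.2⟩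
      have hss : uIcc ε s ⊆ uIcc 0 s := by
        rw [uIcc_of_le hs0.le, uIcc_of_le hε.2.le]
        exact Icc_subset_Icc hε.1.le le_rfl
      have hsub : IntervalIntegrable f volume ε s := (hfint s hs).mono_set hss
      have hftc : (∫ t in ε..s, -f t) = F s - F ε := by
        refine integral_eq_sub_of_hasDerivAt ?_ hsub.neg
        intro t htt
        rw [uIcc_of_le hε.2.le] at htt
        exact hFderiv t ⟨lt_of_lt_of_le hε.1 htt.1, htt.2.trans hs.2⟩
      rw [intervalIntegral.integral_neg] at hftc
      have hsplit : (∫ t in ε..s, f t) = (∫ t in (0:ℝ)..s, f t) - ∫ t in (0:ℝ)..ε, f t :=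
        (integral_interval_sub_left (hfint s hs) (hfint ε hεa)).symm
      rw [hsplit] at hftc
      linear_combination -hftc
    -- bound the constant K := ‖F s + ∫_0^s f‖
    set K : ℝ := ‖F s + ∫ t in (0:ℝ)..s, f t‖ with hK
    have hKb : ∀ ε ∈ Ioo (0:ℝ) s, K ≤ Cy * ε ^ (l - 1/2) + Ce / l * ε ^ l := by
      intro ε hε
      have hεa : ε ∈ Ioc (0:ℝ) a := ⟨hε.1, hε.2.le.trans hs.2⟩
      rw [hK, hstep ε hε]
      refine (norm_add_le _ _).trans (add_le_add ?_ (hintb ε hεa))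
      have : ‖F ε‖ = ε ^ l * ‖y ε‖ := by
        simp [hFdef, Complex.norm_real, Real.norm_eq_abs,
          abs_of_nonneg (Real.rpow_nonneg hε.1.le l)]
      rw [this]
      have hεl : ε ^ l = ε ^ (l - 1/2) * Real.sqrt ε := by
        rw [Real.sqrt_eq_rpow, ← Real.rpow_add hε.1]; ring_nf
      rw [hεl, mul_assoc]
      calc ε ^ (l - 1/2) * (Real.sqrt ε * ‖y ε‖)
          ≤ ε ^ (l - 1/2) * Cy :=
            mul_le_mul_of_nonneg_left (hCy ε hεa) (Real.rpow_nonneg hε.1.le _)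
        _ = Cy * ε ^ (l - 1/2) := mul_comm _ _
    have htend : Filter.Tendsto (fun ε : ℝ => Cy * ε ^ (l - 1/2) + Ce / l * ε ^ l)
        (nhdsWithin 0 (Ioi 0)) (nhds 0) := by
      have h1 : Filter.Tendsto (fun ε : ℝ => ε ^ (l - 1/2)) (nhdsWithin 0 (Ioi 0)) (nhds 0) := by
        have := (Real.continuousAt_rpow_const 0 (l - 1/2) (Or.inr (by linarith : (0:ℝ) ≤ l - 1/2))).tendsto
        rw [Real.zero_rpow (by intro h; linarith : l - 1/2 ≠ 0)] at this
        exact this.mono_left nhdsWithin_le_nhds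
      have h2 : Filter.Tendsto (fun ε : ℝ => ε ^ l) (nhdsWithin 0 (Ioi 0)) (nhds 0) := by
        have := (Real.continuousAt_rpow_const 0 l (Or.inr hl0.le)).tendsto
        rw [Real.zero_rpow hl0.ne'] at this
        exact this.mono_left nhdsWithin_le_nhds
      have := ((h1.const_mul Cy).add (h2.const_mul (Ce / l)))
      simpa using this
    have hK0 : K ≤ 0 := by
      refine ge_of_tendsto htend ?_
      filter_upwards [Ioo_mem_nhdsGT_of_mem (⟨le_rfl, hs0⟩ : (0:ℝ) ∈ Ico 0 s)]
        with ε hε using hKb ε hε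
    have : F s + (∫ t in (0:ℝ)..s, f t) = 0 :=
      norm_eq_zero.mp (le_antisymm hK0 (norm_nonneg _))
    linear_combination this
  constructor
  · intro s hs
    have hs0 : (0:ℝ) < s := hs.1
    have hFs := hkey s hs
    have hne : ((s ^ l : ℝ) : ℂ) ≠ 0 := by
      exact_mod_cast (Real.rpow_pos_of_pos hs0 l).ne'
    have hinv : ((s ^ (-l) : ℝ) : ℂ) * ((s ^ l : ℝ) : ℂ) = 1 := by
      rw [← Complex.ofReal_mul, ← Real.rpow_add hs0]
      norm_num
    have : y s = ((s ^ (-l) : ℝ) : ℂ) * F s := by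
      rw [hFdef]
      simp only
      rw [← mul_assoc, hinv, one_mul]
    rw [this, hFs]
    ring
  · refine ⟨Ce / l, ?_⟩
    intro s hs
    have hs0 : (0:ℝ) < s := hs.1
    have hFs := hkey s hs
    have h1 : s ^ l * ‖y s‖ = ‖F s‖ := by
      simp [hFdef, Complex.norm_real, Real.norm_eq_abs,
        abs_of_nonneg (Real.rpow_nonneg hs0.le l)]
    have h2 : ‖F s‖ ≤ Ce / l * s ^ l := by
      rw [hFs, norm_neg]; exact hintb s hs
    rw [← h1] at h2
    have hsl : (0:ℝ) < s ^ l := Real.rpow_pos_of_pos hs0 l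
    calc ‖y s‖ = (s ^ l * ‖y s‖) / s ^ l := by
          field_simp
      _ ≤ (Ce / l * s ^ l) / s ^ l := by
          exact div_le_div_of_nonneg_right h2 hsl.le
      _ = Ce / l := by
          field_simp
end

section
/- Suppose real-valued differentiable functions f₁, f₂, f₃ on (0, ε] satisfy |f_j(s)| ≤ C s^{-1/2} and the system (d/ds) f₁ + (f₂ + f₃)/s + E₁(s) = 0 (with cyclic permutations), where |E_j(s)| ≤ C s^{-1}. Then (d/ds)[s²(f₁+f₂+f₃)] = O(s), hence f₁ + f₂ + f₃ is bounded on (0, ε]. -/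
open Set

/-- if real differentiable `f₁, f₂, f₃` on `(0, ε]` satisfy `|fⱼ(s)| ≤ C s^{-1/2}`
and `fⱼ' + (f_{j+1} + f_{j+2})/s + Eⱼ = 0` (cyclically) with `|Eⱼ(s)| ≤ C/s`, then
`(d/ds)[s²(f₁+f₂+f₃)] = O(s)`, hence `f₁ + f₂ + f₃` is bounded on `(0, ε]`. -/
theorem stmt_8 (ε C : ℝ) (hε : 0 < ε) (hC : 0 < C)
    (f₁ f₂ f₃ f₁' f₂' f₃' E₁ E₂ E₃ : ℝ → ℝ)
    (hd : ∀ s ∈ Ioc (0:ℝ) ε,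
      HasDerivAt f₁ (f₁' s) s ∧ HasDerivAt f₂ (f₂' s) s ∧ HasDerivAt f₃ (f₃' s) s)
    (hb : ∀ s ∈ Ioc (0:ℝ) ε,
      |f₁ s| ≤ C * s ^ (-(1:ℝ)/2) ∧ |f₂ s| ≤ C * s ^ (-(1:ℝ)/2) ∧ |f₃ s| ≤ C * s ^ (-(1:ℝ)/2))
    (hode : ∀ s ∈ Ioc (0:ℝ) ε,
      f₁' s + (f₂ s + f₃ s)/s + E₁ s = 0 ∧
      f₂' s + (f₃ s + f₁ s)/s + E₂ s = 0 ∧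
      f₃' s + (f₁ s + f₂ s)/s + E₃ s = 0)
    (hEb : ∀ s ∈ Ioc (0:ℝ) ε, |E₁ s| ≤ C / s ∧ |E₂ s| ≤ C / s ∧ |E₃ s| ≤ C / s) :
    (∃ C', ∀ s ∈ Ioc (0:ℝ) ε,
      |2*s*(f₁ s + f₂ s + f₃ s) + s^2*(f₁' s + f₂' s + f₃' s)| ≤ C' * s) ∧
    (∃ C'', ∀ s ∈ Ioc (0:ℝ) ε, |f₁ s + f₂ s + f₃ s| ≤ C'') := by
  -- the key algebraic identity
  have key : ∀ s ∈ Ioc (0:ℝ) ε,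
      2*s*(f₁ s + f₂ s + f₃ s) + s^2*(f₁' s + f₂' s + f₃' s)
        = -(s^2*(E₁ s + E₂ s + E₃ s)) := by
    intro s hs
    obtain ⟨h1, h2, h3⟩ := hode s hs
    have hs0 : s ≠ 0 := ne_of_gt hs.1
    field_simp at h1 h2 h3
    linear_combination s * (h1 + h2 + h3)
  -- the derivative bound
  have keybound : ∀ s ∈ Ioc (0:ℝ) ε,
      |2*s*(f₁ s + f₂ s + f₃ s) + s^2*(f₁' s + f₂' s + f₃' s)| ≤ (3*C) * s := by
    intro s hs
    obtain ⟨e1, e2, e3⟩ := hEb s hs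
    have hs0 : 0 < s := hs.1
    rw [key s hs, abs_neg, abs_mul]
    have hE : |E₁ s + E₂ s + E₃ s| ≤ 3 * C / s := by
      calc |E₁ s + E₂ s + E₃ s| ≤ |E₁ s| + |E₂ s| + |E₃ s| := by
            exact (abs_add_le _ _).trans (by linarith [abs_add_le (E₁ s) (E₂ s)])
        _ ≤ C / s + C / s + C / s := by linarith
        _ = 3 * C / s := by ring
    have h2 : |s^2| = s^2 := abs_of_nonneg (sq_nonneg s)
    rw [h2]
    calc s^2 * |E₁ s + E₂ s + E₃ s| ≤ s^2 * (3*C/s) := by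
          exact mul_le_mul_of_nonneg_left hE (sq_nonneg s)
      _ = (3*C) * s := by field_simp
  refine ⟨⟨3*C, keybound⟩, ⟨3*C, ?_⟩⟩
  -- second part: F := f₁+f₂+f₃, g := t ↦ t² F(t)
  set F : ℝ → ℝ := fun t => f₁ t + f₂ t + f₃ t with hF
  set g : ℝ → ℝ := fun t => t^2 * F t with hg
  have hgd : ∀ t ∈ Ioc (0:ℝ) ε,
      HasDerivAt g (2*t*F t + t^2*(f₁' t + f₂' t + f₃' t)) t := by
    intro t ht
    obtain ⟨d1, d2, d3⟩ := hd t ht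
    have := (hasDerivAt_pow 2 t).mul ((d1.add d2).add d3)
    exact this.congr_deriv (by simp only [F, Pi.add_apply]; ring)
  -- bound on |F a| and hence |g a| for small a
  have hFb : ∀ a ∈ Ioc (0:ℝ) ε, |F a| ≤ 3 * C * a ^ (-(1:ℝ)/2) := by
    intro a ha
    obtain ⟨b1, b2, b3⟩ := hb a ha
    calc |F a| ≤ |f₁ a| + |f₂ a| + |f₃ a| :=
          (abs_add_le _ _).trans (by linarith [abs_add_le (f₁ a) (f₂ a)])
      _ ≤ 3 * C * a ^ (-(1:ℝ)/2) := by linarith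
  intro s hs
  have hs0 : 0 < s := hs.1
  -- show |g s| ≤ 3C s² via MVT on [a, s] and a → 0
  have hgs : |g s| ≤ 3 * C * s^2 := by
    refine le_of_forall_pos_le_add ?_
    intro η hη
    set a : ℝ := min s (min 1 (η / (3*C))) with ha
    have ha0 : 0 < a := by
      apply lt_min hs0
      apply lt_min one_pos
      positivity
    have has : a ≤ s := min_le_left _ _
    have ha1 : a ≤ 1 := le_trans (min_le_right _ _) (min_le_left _ _)
    have haη : a ≤ η / (3*C) := le_trans (min_le_right _ _) (min_le_right _ _)
    have hsub : Icc a s ⊆ Ioc (0:ℝ) ε := fun t ht =>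
      ⟨lt_of_lt_of_le ha0 ht.1, le_trans ht.2 hs.2⟩
    -- MVT bound on [a, s]
    have hmvt : |g s - g a| ≤ (3*C*s) * |s - a| := by
      have hconv : Convex ℝ (Icc a s) := convex_Icc a s
      have hderiv : ∀ t ∈ Icc a s,
          HasDerivWithinAt g (2*t*F t + t^2*(f₁' t + f₂' t + f₃' t)) (Icc a s) t :=
        fun t ht => (hgd t (hsub ht)).hasDerivWithinAt
      have hbnd : ∀ t ∈ Icc a s, ‖2*t*F t + t^2*(f₁' t + f₂' t + f₃' t)‖ ≤ 3*C*s := by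
        intro t ht
        have ht' := hsub ht
        calc ‖2*t*F t + t^2*(f₁' t + f₂' t + f₃' t)‖ ≤ 3*C*t := keybound t ht'
          _ ≤ 3*C*s := by
              have := ht.2
              nlinarith
      have := hconv.norm_image_sub_le_of_norm_hasDerivWithin_le hderiv hbnd
        (left_mem_Icc.2 has) (right_mem_Icc.2 has)
      simpa using this
    have hga : |g a| ≤ 3 * C * a := by
      have hFa := hFb a (hsub (left_mem_Icc.2 has))
      have h1 : |g a| = a^2 * |F a| := by
        rw [hg, abs_mul, abs_of_nonneg (sq_nonneg a)]
      have h2 : a^2 * |F a| ≤ a^2 * (3 * C * a ^ (-(1:ℝ)/2)) :=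
        mul_le_mul_of_nonneg_left hFa (sq_nonneg a)
      have hpow : a^2 * a ^ (-(1:ℝ)/2) = a ^ ((3:ℝ)/2) := by
        rw [← Real.rpow_natCast a 2, ← Real.rpow_add ha0]
        norm_num
      have h3 : a^2 * (3 * C * a ^ (-(1:ℝ)/2)) = 3 * C * a ^ ((3:ℝ)/2) := by
        rw [← hpow]; ring
      have h4 : a ^ ((3:ℝ)/2) ≤ a ^ ((1:ℝ)) := by
        apply Real.rpow_le_rpow_of_exponent_ge ha0 ha1
        norm_num
      rw [Real.rpow_one] at h4
      calc |g a| = a^2 * |F a| := h1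
        _ ≤ 3 * C * a ^ ((3:ℝ)/2) := by rw [← h3]; exact h2
        _ ≤ 3 * C * a := by nlinarith
    have habs : |s - a| = s - a := abs_of_nonneg (by linarith)
    have h3Ca : 3 * C * a ≤ η := by
      have := mul_le_mul_of_nonneg_left haη (le_of_lt (by positivity : (0:ℝ) < 3*C))
      rwa [mul_div_cancel₀ _ (by positivity : (3*C) ≠ 0)] at this
    calc |g s| ≤ |g s - g a| + |g a| := by
          have := abs_add_le (g s - g a) (g a); simpa using this
      _ ≤ (3*C*s) * (s - a) + 3 * C * a := by rw [habs] at hmvt; linarith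
      _ ≤ 3 * C * s^2 + η := by
          nlinarith [mul_nonneg (mul_nonneg (by positivity : (0:ℝ) ≤ 3*C) hs0.le) ha0.le]
  -- conclude
  have : |F s| = |g s| / s^2 := by
    rw [hg, abs_mul, abs_of_nonneg (sq_nonneg s)]
    field_simp
  rw [show f₁ s + f₂ s + f₃ s = F s from rfl, this]
  rw [div_le_iff₀ (by positivity)]
  nlinarith
end

section
/- For all weights w_a of an su(2) irreducible representation of highest weight μ (so w_a ∈ [-μ, μ]) and all s > 0, |t| > 0: (μ² + 2μ - w_a²)/(4s²) + (w_a/(2s) - |t|)² ≥ (2/(μ+2)) |t|², hence ∑_{j=1}^3 |(iρ_j/(2s) + t_j) f|² ≥ (2/(μ+2)) |t|² |f|² for every f. -/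
set_option maxHeartbeats 1600000

open Matrix

private lemma aux_sum_mulVec {n ι : Type} [Fintype n] [Fintype ι]
    (A : ι → Matrix n n ℂ) (v : n → ℂ) :
    (∑ a, A a) *ᵥ v = ∑ a, A a *ᵥ v := by
  ext i
  simp [Matrix.mulVec, dotProduct, Finset.sum_apply, Matrix.sum_apply, Finset.sum_mul]
  rw [Finset.sum_comm]

private lemma aux_mulVec_sum {n ι : Type} [Fintype n] [Fintype ι]
    (A : Matrix n n ℂ) (g : ι → n → ℂ) :
    A *ᵥ (∑ a, g a) = ∑ a, A *ᵥ g a := by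
  ext i
  simp [Matrix.mulVec, dotProduct, Finset.sum_apply, Finset.mul_sum]
  rw [Finset.sum_comm]

private lemma aux_dotProduct_sum {n ι : Type} [Fintype n] [Fintype ι]
    (u : n → ℂ) (g : ι → n → ℂ) :
    u ⬝ᵥ (∑ a, g a) = ∑ a, u ⬝ᵥ g a := by
  simp [dotProduct, Finset.mul_sum, Finset.sum_apply]
  rw [Finset.sum_comm]

private lemma aux_abs {n : Type} [Fintype n] (v : n → ℂ) :
    star v ⬝ᵥ v = ((∑ i, ‖v i‖ ^ 2 : ℝ) : ℂ) := by
  simp only [dotProduct, Pi.star_apply, Complex.star_def]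
  push_cast
  refine Finset.sum_congr rfl fun i _ => ?_
  rw [mul_comm, Complex.mul_conj, Complex.normSq_eq_norm_sq]
  push_cast; ring

private lemma aux_quad {n : Type} [Fintype n] (M : Matrix n n ℂ) (v : n → ℂ) :
    star (M *ᵥ v) ⬝ᵥ (M *ᵥ v) = star v ⬝ᵥ (Mᴴ * M) *ᵥ v := by
  rw [Matrix.star_mulVec, ← Matrix.dotProduct_mulVec, Matrix.mulVec_mulVec]

/-- for all weights `w` of an `su(2)` irreducible representation of highest
weight `μ` (so `|w| ≤ μ`) and all `s > 0`, `|t| = T > 0`: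
`(μ² + 2μ - w²)/(4s²) + (w/(2s) - T)² ≥ (2/(μ+2)) T²`, hence
`∑ⱼ |(iρⱼ/(2s) + tⱼ) f|² ≥ (2/(μ+2)) T² |f|²` for every `f`. -/
theorem stmt_14 (m : ℕ) (μ : ℝ) (hμ : μ = (m : ℝ))
    (ρ : Fin 3 → Matrix (Fin (m+1)) (Fin (m+1)) ℂ)
    (hskew : ∀ j, (ρ j).conjTranspose = -(ρ j))
    (hcas : ∑ j, (Complex.I • ρ j) * (Complex.I • ρ j)
      = (((μ^2 + 2*μ : ℝ)) : ℂ) • (1 : Matrix (Fin (m+1)) (Fin (m+1)) ℂ))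
    (t : Fin 3 → ℝ) (T : ℝ) (hT : T = Real.sqrt (∑ j, (t j)^2)) (hTpos : 0 < T)
    (ι : Type) [Fintype ι] (w : ι → ℝ) (hw : ∀ a, |w a| ≤ μ)
    (pr : ι → Matrix (Fin (m+1)) (Fin (m+1)) ℂ)
    (hsum : ∑ a, pr a = 1)
    (hidem : ∀ a, pr a * pr a = pr a)
    (hherm : ∀ a, (pr a).conjTranspose = pr a)
    (horth : ∀ a b, a ≠ b → pr a * pr b = 0)
    (heig : ∀ a, (∑ j, (t j : ℂ) • (Complex.I • ρ j)) * pr a = (((T * w a : ℝ)) : ℂ) • pr a)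
    (s : ℝ) (hs : 0 < s) (f : Fin (m+1) → ℂ) :
    (∀ a, (2/(μ+2)) * T^2
        ≤ (μ^2 + 2*μ - (w a)^2)/(4*s^2) + (w a/(2*s) - T)^2) ∧
    (2/(μ+2)) * T^2 * (∑ i, ‖f i‖ ^ 2)
      ≤ ∑ j, ∑ i, ‖(((1/(2*s) : ℝ) • (Complex.I • ρ j)
          + ((t j : ℂ)) • (1 : Matrix (Fin (m+1)) (Fin (m+1)) ℂ)).mulVec f) i‖ ^ 2 := by
  have hμ0 : (0:ℝ) ≤ μ := by rw [hμ]; positivity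
  have h2 : (0:ℝ) < μ + 2 := by linarith
  have hT2 : T^2 = ∑ j, (t j)^2 := by
    rw [hT, Real.sq_sqrt]; positivity
  -- scalar key inequality
  have key : ∀ W : ℝ, |W| ≤ μ →
      2/(μ+2) * T^2 ≤ (μ^2 + 2*μ)/(4*s^2) - T*W/s + T^2 := by
    intro W hW
    have h1 : W ≤ μ := (abs_le.1 hW).2
    have e : (μ^2 + 2*μ)/(4*s^2) - T*W/s + T^2 - 2/(μ+2) * T^2
        = ((μ - W)*T*(4*s*(μ+2)) + μ*((μ+2) - 2*s*T)^2) / (4*s^2*(μ+2)) := by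
      field_simp
      ring
    have h3 : 0 ≤ (μ - W)*T*(4*s*(μ+2)) :=
      mul_nonneg (mul_nonneg (by linarith) hTpos.le) (by positivity)
    have h4 : 0 ≤ μ*((μ+2) - 2*s*T)^2 := mul_nonneg hμ0 (sq_nonneg _)
    have h5 : 0 ≤ ((μ - W)*T*(4*s*(μ+2)) + μ*((μ+2) - 2*s*T)^2) / (4*s^2*(μ+2)) := by
      apply div_nonneg (by linarith) (by positivity)
    linarith [e ▸ h5]
  -- part 1
  have part1 : ∀ a, (2/(μ+2)) * T^2
      ≤ (μ^2 + 2*μ - (w a)^2)/(4*s^2) + (w a/(2*s) - T)^2 := by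
    intro a
    have e : (μ^2 + 2*μ - (w a)^2)/(4*s^2) + (w a/(2*s) - T)^2
        = (μ^2 + 2*μ)/(4*s^2) - T*(w a)/s + T^2 := by
      field_simp; ring
    rw [e]; exact key (w a) (hw a)
  refine ⟨part1, ?_⟩
  -- part 2
  set M : Fin 3 → Matrix (Fin (m+1)) (Fin (m+1)) ℂ := fun j =>
    (1/(2*s) : ℝ) • (Complex.I • ρ j) + ((t j : ℂ)) • (1 : Matrix (Fin (m+1)) (Fin (m+1)) ℂ)
    with hMdef
  have hconv : ∀ (r : ℝ) (A : Matrix (Fin (m+1)) (Fin (m+1)) ℂ), r • A = ((r:ℂ)) • A := by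
    intro r A; ext i k; simp [Matrix.smul_apply, Complex.real_smul]
  have hM' : ∀ j, M j = (((1/(2*s) : ℝ)):ℂ) • (Complex.I • ρ j)
      + ((t j : ℂ)) • (1 : Matrix (Fin (m+1)) (Fin (m+1)) ℂ) := by
    intro j; rw [hMdef]; simp only [← hconv]
  -- self-adjointness
  have hIherm : ∀ j, (Complex.I • ρ j)ᴴ = Complex.I • ρ j := by
    intro j
    rw [Matrix.conjTranspose_smul, hskew j, Complex.star_def, Complex.conj_I,
      neg_smul, smul_neg, neg_neg]
  have hMherm : ∀ j, (M j)ᴴ = M j := by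
    intro j
    rw [hM']
    simp [Matrix.conjTranspose_add, Matrix.conjTranspose_smul, hIherm j,
      Complex.star_def, Complex.conj_ofReal]
  -- the quadratic matrix identity
  set X : Matrix (Fin (m+1)) (Fin (m+1)) ℂ := ∑ j, (t j : ℂ) • (Complex.I • ρ j) with hXdef
  have expand : ∀ j, M j * M j
      = ((((1/(2*s) : ℝ)):ℂ) * (((1/(2*s) : ℝ)):ℂ)) • ((Complex.I • ρ j) * (Complex.I • ρ j))
        + ((((1/s : ℝ)):ℂ) * (t j : ℂ)) • (Complex.I • ρ j)
        + (((t j : ℂ)) * (t j : ℂ)) • (1 : Matrix (Fin (m+1)) (Fin (m+1)) ℂ) := by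
    intro j
    rw [hM']
    simp only [add_mul, mul_add, smul_mul_assoc, mul_smul_comm, mul_one, one_mul, smul_smul]
    match_scalars <;> (push_cast; field_simp; try ring)
  have hA : ∑ j, M j * M j
      = ((((μ^2 + 2*μ)/(4*s^2) + T^2 : ℝ)):ℂ) • (1 : Matrix (Fin (m+1)) (Fin (m+1)) ℂ)
        + (((1/s : ℝ)):ℂ) • X := by
    rw [Finset.sum_congr rfl (fun j _ => expand j)]
    rw [Finset.sum_add_distrib, Finset.sum_add_distrib]
    rw [← Finset.smul_sum, hcas]
    have eB : ∑ j : Fin 3, ((((1/s : ℝ)):ℂ) * (t j : ℂ)) • (Complex.I • ρ j)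
        = (((1/s : ℝ)):ℂ) • ∑ j : Fin 3, (t j : ℂ) • (Complex.I • ρ j) := by
      rw [Finset.smul_sum]
      exact Finset.sum_congr rfl fun j _ => (smul_smul _ _ _).symm
    have eC : ∑ j : Fin 3, (((t j : ℂ)) * (t j : ℂ)) • (1 : Matrix (Fin (m+1)) (Fin (m+1)) ℂ)
        = ((T^2 : ℝ):ℂ) • (1 : Matrix (Fin (m+1)) (Fin (m+1)) ℂ) := by
      rw [← Finset.sum_smul]
      congr 1
      rw [hT2]; push_cast
      exact Finset.sum_congr rfl fun j _ => by ring
    rw [eB, eC, smul_smul, ← hXdef, add_right_comm, ← add_smul]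
    congr 2
    push_cast; field_simp
    try ring
  -- action on each projection
  have hApr : ∀ a, (∑ j, M j * M j) * pr a
      = ((((μ^2 + 2*μ)/(4*s^2) + T^2 + T * w a / s : ℝ)):ℂ) • pr a := by
    intro a
    rw [hA, add_mul, smul_mul_assoc, one_mul, smul_mul_assoc, heig a, smul_smul, ← add_smul]
    congr 1
    push_cast; field_simp
    try ring
  -- projected norms
  set Q : ι → ℝ := fun a => ∑ i, ‖(pr a *ᵥ f) i‖ ^ 2 with hQdef
  have hq : ∀ a, star f ⬝ᵥ (pr a *ᵥ f) = ((Q a : ℝ) : ℂ) := by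
    intro a
    calc star f ⬝ᵥ (pr a *ᵥ f) = star f ⬝ᵥ ((pr a * pr a) *ᵥ f) := by rw [hidem a]
      _ = star f ⬝ᵥ ((pr a)ᴴ *ᵥ (pr a *ᵥ f)) := by rw [Matrix.mulVec_mulVec, hherm a]
      _ = star (pr a *ᵥ f) ⬝ᵥ (pr a *ᵥ f) := by
          rw [Matrix.star_mulVec, Matrix.dotProduct_mulVec]
      _ = ((Q a : ℝ) : ℂ) := aux_abs _
  have hQnonneg : ∀ a, 0 ≤ Q a := fun a => by rw [hQdef]; positivity
  -- total norm decomposition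
  have hfsum : ((∑ i, ‖f i‖ ^ 2 : ℝ) : ℂ) = ∑ a, ((Q a : ℝ) : ℂ) := by
    rw [← aux_abs f]
    have hrw : star f ⬝ᵥ f = star f ⬝ᵥ ((∑ a, pr a) *ᵥ f) := by
      rw [hsum, Matrix.one_mulVec]
    rw [hrw, aux_sum_mulVec, aux_dotProduct_sum]
    exact Finset.sum_congr rfl fun a _ => hq a
  have hQsum : ∑ a, Q a = ∑ i, ‖f i‖ ^ 2 := by
    have h := hfsum
    push_cast at h
    exact_mod_cast h.symm
  -- the main quadratic form computation
  have hmain : ((∑ j, ∑ i, ‖(M j *ᵥ f) i‖ ^ 2 : ℝ) : ℂ)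
      = ((∑ a, ((μ^2 + 2*μ)/(4*s^2) + T^2 + T * w a / s) * Q a : ℝ) : ℂ) := by
    push_cast
    calc (∑ j, ∑ i, (‖(M j *ᵥ f) i‖ : ℂ) ^ 2)
        = ∑ j, star (M j *ᵥ f) ⬝ᵥ (M j *ᵥ f) := by
          refine Finset.sum_congr rfl fun j _ => ?_
          rw [aux_abs]; push_cast; ring
      _ = ∑ j, star f ⬝ᵥ ((M j * M j) *ᵥ f) := by
          refine Finset.sum_congr rfl fun j _ => ?_
          rw [aux_quad, hMherm j]
      _ = star f ⬝ᵥ ((∑ j, M j * M j) *ᵥ f) := by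
          rw [aux_sum_mulVec, aux_dotProduct_sum]
      _ = star f ⬝ᵥ ((∑ j, M j * M j) *ᵥ ((∑ a, pr a) *ᵥ f)) := by
          rw [hsum, Matrix.one_mulVec]
      _ = ∑ a, star f ⬝ᵥ (((∑ j, M j * M j) * pr a) *ᵥ f) := by
          rw [aux_sum_mulVec pr f, aux_mulVec_sum, aux_dotProduct_sum]
          exact Finset.sum_congr rfl fun a _ => by rw [Matrix.mulVec_mulVec]
      _ = ∑ a, (((μ^2 + 2*μ)/(4*s^2) + T^2 + T * w a / s : ℝ) : ℂ) * ((Q a : ℝ) : ℂ) := by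
          refine Finset.sum_congr rfl fun a _ => ?_
          rw [hApr a, Matrix.smul_mulVec, dotProduct_smul, smul_eq_mul, hq a]
      _ = ∑ a, (((μ:ℂ)^2 + 2*(μ:ℂ))/(4*(s:ℂ)^2) + (T:ℂ)^2 + (T:ℂ) * (w a : ℂ) / (s:ℂ))
            * ((Q a : ℝ) : ℂ) := by
          refine Finset.sum_congr rfl fun a _ => ?_
          push_cast; ring
  have hreal : ∑ j, ∑ i, ‖(M j *ᵥ f) i‖ ^ 2
      = ∑ a, ((μ^2 + 2*μ)/(4*s^2) + T^2 + T * w a / s) * Q a :=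
    Complex.ofReal_inj.mp hmain
  -- final inequality
  have keyC : ∀ a, 2/(μ+2) * T^2 ≤ (μ^2 + 2*μ)/(4*s^2) + T^2 + T * w a / s := by
    intro a
    have h := key (-(w a)) (by simpa using hw a)
    have e : T*(-(w a))/s = -(T * w a / s) := by ring
    linarith [e ▸ h]
  calc 2/(μ+2) * T^2 * (∑ i, ‖f i‖ ^ 2)
      = ∑ a, 2/(μ+2) * T^2 * Q a := by rw [← hQsum, Finset.mul_sum]
    _ ≤ ∑ a, ((μ^2 + 2*μ)/(4*s^2) + T^2 + T * w a / s) * Q a :=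
        Finset.sum_le_sum fun a _ => mul_le_mul_of_nonneg_right (keyC a) (hQnonneg a)
    _ = ∑ j, ∑ i, ‖(M j *ᵥ f) i‖ ^ 2 := hreal.symm
end
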